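/- Let θ > 0 and let φ : (0,1] → ℝ be a measurable function such that z ↦ φ(z)/(z(1+z)) is integrable on (0,1]. Define r(x,y) = θ·max(x,y)·φ(min(x,y)/max(x,y)) for x, y > 0. Then ∫₀^∞∫₀^∞ r(x,y)·(1/(xy))·e^{−θ(x+y)} dx dy = 2·∫₀^1 φ(z)/(z(1+z)) dz. (This is the change-of-variables identity used to evaluate the double-integral component of the asymptotic variance of the blocks estimators.) -/

import Mathlib

open MeasureTheory Set Real


noncomputable def Fc (θ : ℝ) (φ : ℝ → ℝ) (x z : ℝ) : ℝ :=
  θ * φ z / z * Real.exp (-(θ * (1 + z) * x)) + θ * φ z / z ^ 2 * Real.exp (-(θ * (1 + z⁻¹) * x))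

lemma img1 {x : ℝ} (hx : 0 < x) : (fun z => x * z) '' Set.Ioc 0 1 = Set.Ioc 0 x := by
  ext y
  constructor
  · rintro ⟨z, ⟨hz0, hz1⟩, rfl⟩
    exact ⟨by positivity, by simpa using mul_le_of_le_one_right hx.le hz1⟩
  · rintro ⟨hy0, hyx⟩
    exact ⟨y / x, ⟨by positivity, by rw [div_le_one hx]; exact hyx⟩, by field_simp⟩

lemma img2 {x : ℝ} (hx : 0 < x) : (fun z => x / z) '' Set.Ioo 0 1 = Set.Ioi x := by
  ext y
  constructor
  · rintro ⟨z, ⟨hz0, hz1⟩, rfl⟩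
    have : x < x / z := by rw [lt_div_iff₀ hz0]; nlinarith
    exact this
  · intro hy
    have hy0 : 0 < y := hx.trans hy
    refine ⟨x / y, ⟨by positivity, by rw [div_lt_one hy0]; exact hy⟩, by field_simp⟩

lemma deriv1 {x : ℝ} (z : ℝ) :
    HasDerivWithinAt (fun z => x * z) x (Set.Ioc 0 1) z := by
  simpa using ((hasDerivAt_id z).const_mul x).hasDerivWithinAt

lemma inj1 {x : ℝ} (hx : 0 < x) : Set.InjOn (fun z => x * z) (Set.Ioc (0:ℝ) 1) :=
  fun a _ b _ h => mul_left_cancel₀ hx.ne' h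

lemma subst1 {x : ℝ} (hx : 0 < x) (g : ℝ → ℝ) :
    ∫ y in Set.Ioc 0 x, g y = ∫ z in Set.Ioc (0:ℝ) 1, |x| • g (x * z) := by
  rw [← img1 hx]
  exact integral_image_eq_integral_abs_deriv_smul measurableSet_Ioc
    (fun z _ => deriv1 z) (inj1 hx) g

lemma subst1_int {x : ℝ} (hx : 0 < x) (g : ℝ → ℝ) :
    IntegrableOn g (Set.Ioc 0 x) ↔ IntegrableOn (fun z => |x| • g (x * z)) (Set.Ioc (0:ℝ) 1) := by
  rw [← img1 hx]
  exact integrableOn_image_iff_integrableOn_abs_deriv_smul measurableSet_Ioc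
    (fun z _ => deriv1 z) (inj1 hx) g

lemma deriv2 {x z : ℝ} (hz : z ∈ Set.Ioo (0:ℝ) 1) :
    HasDerivWithinAt (fun z => x / z) (x * -(z ^ 2)⁻¹) (Set.Ioo 0 1) z := by
  simpa [div_eq_mul_inv] using ((hasDerivAt_inv hz.1.ne').const_mul x).hasDerivWithinAt

lemma inj2 {x : ℝ} (hx : 0 < x) : Set.InjOn (fun z => x / z) (Set.Ioo 0 1) := by
  intro a ha b hb h
  simp only at h
  rw [div_eq_div_iff ha.1.ne' hb.1.ne'] at h
  exact (mul_left_cancel₀ hx.ne' h).symm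

lemma subst2 {x : ℝ} (hx : 0 < x) (g : ℝ → ℝ) :
    ∫ y in Set.Ioi x, g y = ∫ z in Set.Ioo (0:ℝ) 1, |x * -(z ^ 2)⁻¹| • g (x / z) := by
  rw [← img2 hx]
  exact integral_image_eq_integral_abs_deriv_smul measurableSet_Ioo
    (fun z hz => deriv2 hz) (inj2 hx) g

lemma subst2_int {x : ℝ} (hx : 0 < x) (g : ℝ → ℝ) :
    IntegrableOn g (Set.Ioi x) ↔
      IntegrableOn (fun z => |x * -(z ^ 2)⁻¹| • g (x / z)) (Set.Ioo (0:ℝ) 1) := by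
  rw [← img2 hx]
  exact integrableOn_image_iff_integrableOn_abs_deriv_smul measurableSet_Ioo
    (fun z hz => deriv2 hz) (inj2 hx) g

lemma exp_neg_le_inv {t : ℝ} (ht : 0 < t) : Real.exp (-t) ≤ t⁻¹ := by
  have h : t ≤ Real.exp t := by linarith [Real.add_one_le_exp t]
  rw [Real.exp_neg]
  exact inv_anti₀ ht h

lemma measT1 {θ x : ℝ} {φ : ℝ → ℝ} (hφ_meas : Measurable φ) :
    Measurable fun z => θ * φ z / z * Real.exp (-(θ * (1 + z) * x)) := by fun_prop

lemma measT2 {θ x : ℝ} {φ : ℝ → ℝ} (hφ_meas : Measurable φ) :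
    Measurable fun z => θ * φ z / z ^ 2 * Real.exp (-(θ * (1 + z⁻¹) * x)) := by fun_prop

lemma eq1 {θ x : ℝ} {φ : ℝ → ℝ} (hx : 0 < x) {z : ℝ} (hz : z ∈ Set.Ioc (0:ℝ) 1) :
    |x| • ((θ * max x (x * z) * φ (min x (x * z) / max x (x * z))) * (1 / (x * (x * z))) *
        Real.exp (-θ * (x + x * z)))
      = θ * φ z / z * Real.exp (-(θ * (1 + z) * x)) := by
  obtain ⟨hz0, hz1⟩ := hz
  have hle : x * z ≤ x := by simpa using mul_le_of_le_one_right hx.le hz1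
  have hmm : x * z / x = z := by field_simp
  have he : -θ * (x + x * z) = -(θ * (1 + z) * x) := by ring
  rw [max_eq_left hle, min_eq_right hle, hmm, abs_of_pos hx, he, smul_eq_mul]
  field_simp

lemma eq2 {θ x : ℝ} {φ : ℝ → ℝ} (hx : 0 < x) {z : ℝ} (hz : z ∈ Set.Ioo (0:ℝ) 1) :
    |x * -(z ^ 2)⁻¹| • ((θ * max x (x / z) * φ (min x (x / z) / max x (x / z))) *
        (1 / (x * (x / z))) * Real.exp (-θ * (x + x / z)))
      = θ * φ z / z ^ 2 * Real.exp (-(θ * (1 + z⁻¹) * x)) := by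
  obtain ⟨hz0, hz1⟩ := hz
  have hle : x ≤ x / z := by
    rw [le_div_iff₀ hz0]
    simpa using mul_le_of_le_one_right hx.le hz1.le
  have habs : |x * -(z ^ 2)⁻¹| = x / z ^ 2 := by
    rw [abs_mul, abs_of_pos hx, abs_neg, abs_inv, abs_of_pos (pow_pos hz0 2), div_eq_mul_inv]
  have hmm : x / (x / z) = z := by field_simp
  have he : -θ * (x + x / z) = -(θ * (1 + z⁻¹) * x) := by
    rw [div_eq_mul_inv]; ring
  rw [max_eq_right hle, min_eq_left hle, hmm, habs, he, smul_eq_mul]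
  field_simp

lemma intT1 {θ x : ℝ} {φ : ℝ → ℝ} (hθ : 0 < θ) (hφ_meas : Measurable φ)
    (hφ_int : IntegrableOn (fun z => φ z / z) (Set.Ioc (0:ℝ) 1)) (hx : 0 < x) :
    IntegrableOn (fun z => θ * φ z / z * Real.exp (-(θ * (1 + z) * x))) (Set.Ioc (0:ℝ) 1) := by
  apply Integrable.mono (g := fun z => θ * (φ z / z)) (hφ_int.const_mul θ)
    (measT1 hφ_meas).aestronglyMeasurable
  filter_upwards [ae_restrict_mem measurableSet_Ioc] with z hz
  obtain ⟨hz0, _⟩ := hz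
  have he1 : Real.exp (-(θ * (1 + z) * x)) ≤ 1 := by
    apply Real.exp_le_one_iff.mpr
    have h0 : 0 < θ * (1 + z) * x := by positivity
    linarith
  have hg : ‖θ * (φ z / z)‖ = |θ * φ z / z| := by rw [Real.norm_eq_abs, mul_div_assoc]
  rw [hg, norm_mul, Real.norm_eq_abs, Real.norm_eq_abs, abs_of_pos (Real.exp_pos _)]
  calc |θ * φ z / z| * Real.exp (-(θ * (1 + z) * x)) ≤ |θ * φ z / z| * 1 :=
        mul_le_mul_of_nonneg_left he1 (abs_nonneg _)
    _ = |θ * φ z / z| := mul_one _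

lemma intT2 {θ x : ℝ} {φ : ℝ → ℝ} (hθ : 0 < θ) (hφ_meas : Measurable φ)
    (hφ_int : IntegrableOn (fun z => φ z / z) (Set.Ioc (0:ℝ) 1)) (hx : 0 < x) :
    IntegrableOn (fun z => θ * φ z / z ^ 2 * Real.exp (-(θ * (1 + z⁻¹) * x)))
      (Set.Ioc (0:ℝ) 1) := by
  apply Integrable.mono (g := fun z => x⁻¹ * (φ z / z)) (hφ_int.const_mul x⁻¹)
    (measT2 hφ_meas).aestronglyMeasurable
  filter_upwards [ae_restrict_mem measurableSet_Ioc] with z hz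
  obtain ⟨hz0, hz1⟩ := hz
  have key : Real.exp (-(θ * (1 + z⁻¹) * x)) ≤ z / (θ * x) := by
    have h1 : θ * x * z⁻¹ ≤ θ * (1 + z⁻¹) * x := by
      have h2 : 0 < θ * x := by positivity
      nlinarith [le_refl (θ * x * z⁻¹)]
    calc Real.exp (-(θ * (1 + z⁻¹) * x)) ≤ Real.exp (-(θ * x * z⁻¹)) := by
          apply Real.exp_le_exp.mpr; linarith
      _ ≤ (θ * x * z⁻¹)⁻¹ := exp_neg_le_inv (by positivity)
      _ = z / (θ * x) := by field_simp
  have hz2 : (0:ℝ) < z ^ 2 := pow_pos hz0 2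
  have hnn : (0:ℝ) ≤ θ * |φ z| / z ^ 2 := by positivity
  rw [Real.norm_eq_abs, Real.norm_eq_abs, abs_mul, abs_of_pos (Real.exp_pos _)]
  calc |θ * φ z / z ^ 2| * Real.exp (-(θ * (1 + z⁻¹) * x))
      ≤ θ * |φ z| / z ^ 2 * (z / (θ * x)) := by
        apply mul_le_mul _ key (Real.exp_pos _).le hnn
        rw [abs_div, abs_mul, abs_of_pos hθ, abs_of_pos hz2]
    _ = x⁻¹ * |φ z / z| := by
        rw [abs_div, abs_of_pos hz0]
        field_simp
    _ ≤ |x⁻¹ * (φ z / z)| := by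
        rw [abs_mul, abs_of_pos (inv_pos.mpr hx), abs_div, abs_of_pos hz0]


lemma exp_int (b : ℝ) (hb : 0 < b) :
    IntegrableOn (fun x => Real.exp (-(b * x))) (Set.Ioi (0:ℝ)) := by
  simpa [neg_mul] using exp_neg_integrableOn_Ioi 0 hb

lemma exp_val (b : ℝ) (hb : 0 < b) :
    ∫ x in Set.Ioi (0:ℝ), Real.exp (-(b * x)) = b⁻¹ := by
  have := integral_comp_mul_left_Ioi (fun x => Real.exp (-x)) 0 hb
  simp only [mul_zero] at this
  rw [this, integral_exp_neg_Ioi_zero, smul_eq_mul, mul_one]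

section
variable {θ : ℝ} {φ : ℝ → ℝ}

lemma exp_int1 (hθ : 0 < θ) {z : ℝ} (hz0 : 0 < z) :
    Integrable (fun x => Real.exp (-(θ * (1 + z) * x))) (volume.restrict (Set.Ioi (0:ℝ))) := by
  have h : (0:ℝ) < θ * (1 + z) := by positivity
  simpa [mul_assoc, IntegrableOn] using exp_int (θ * (1 + z)) h

lemma exp_int2 (hθ : 0 < θ) {z : ℝ} (hz0 : 0 < z) :
    Integrable (fun x => Real.exp (-(θ * (1 + z⁻¹) * x))) (volume.restrict (Set.Ioi (0:ℝ))) := by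
  have h : (0:ℝ) < θ * (1 + z⁻¹) := by positivity
  simpa [mul_assoc, IntegrableOn] using exp_int (θ * (1 + z⁻¹)) h

lemma exp_val1 (hθ : 0 < θ) {z : ℝ} (hz0 : 0 < z) :
    ∫ x in Set.Ioi (0:ℝ), Real.exp (-(θ * (1 + z) * x)) = (θ * (1 + z))⁻¹ := by
  have h : (0:ℝ) < θ * (1 + z) := by positivity
  simpa [mul_assoc] using exp_val (θ * (1 + z)) h

lemma exp_val2 (hθ : 0 < θ) {z : ℝ} (hz0 : 0 < z) :
    ∫ x in Set.Ioi (0:ℝ), Real.exp (-(θ * (1 + z⁻¹) * x)) = (θ * (1 + z⁻¹))⁻¹ := by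
  have h : (0:ℝ) < θ * (1 + z⁻¹) := by positivity
  simpa [mul_assoc] using exp_val (θ * (1 + z⁻¹)) h

lemma int_x (hθ : 0 < θ) {z : ℝ} (hz0 : 0 < z) :
    Integrable (fun x => Fc θ φ x z) (volume.restrict (Set.Ioi (0:ℝ))) := by
  unfold Fc
  exact ((exp_int1 hθ hz0).const_mul (θ * φ z / z)).add
    ((exp_int2 hθ hz0).const_mul (θ * φ z / z ^ 2))

lemma xint_val (hθ : 0 < θ) {z : ℝ} (hz0 : 0 < z) :
    ∫ x in Set.Ioi (0:ℝ), Fc θ φ x z = 2 * (φ z / (z * (1 + z))) := by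
  unfold Fc
  rw [integral_add ((exp_int1 hθ hz0).const_mul (θ * φ z / z))
      ((exp_int2 hθ hz0).const_mul (θ * φ z / z ^ 2)),
    integral_const_mul, integral_const_mul, exp_val1 hθ hz0, exp_val2 hθ hz0]
  have h1 : (0:ℝ) < 1 + z := by positivity
  have h2 : (0:ℝ) < 1 + z⁻¹ := by positivity
  field_simp
  ring

lemma xint_abs (hθ : 0 < θ) {z : ℝ} (hz0 : 0 < z) :
    ∫ x in Set.Ioi (0:ℝ),
        (|θ * φ z / z| * Real.exp (-(θ * (1 + z) * x)) +
          |θ * φ z / z ^ 2| * Real.exp (-(θ * (1 + z⁻¹) * x)))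
      = 2 * |φ z| / (z * (1 + z)) := by
  rw [integral_add ((exp_int1 hθ hz0).const_mul _) ((exp_int2 hθ hz0).const_mul _),
    integral_const_mul, integral_const_mul, exp_val1 hθ hz0, exp_val2 hθ hz0]
  have h1 : (0:ℝ) < 1 + z := by positivity
  have h2 : (0:ℝ) < 1 + z⁻¹ := by positivity
  rw [abs_div, abs_div, abs_mul, abs_of_pos hθ, abs_of_pos hz0,
    abs_of_pos (pow_pos hz0 2)]
  field_simp
  ring

end


section
variable {θ : ℝ} {φ : ℝ → ℝ}

lemma inner_eq (hθ : 0 < θ) (hφ_meas : Measurable φ)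
    (hφ_int' : IntegrableOn (fun z => φ z / z) (Set.Ioc (0:ℝ) 1))
    {x : ℝ} (hx : 0 < x) :
    ∫ y in Set.Ioi (0:ℝ),
        (θ * max x y * φ (min x y / max x y)) * (1 / (x * y)) * Real.exp (-θ * (x + y))
      = ∫ z in Set.Ioc (0:ℝ) 1, Fc θ φ x z := by
  set g : ℝ → ℝ := fun y =>
    (θ * max x y * φ (min x y / max x y)) * (1 / (x * y)) * Real.exp (-θ * (x + y)) with hg
  have hA : ∫ y in Set.Ioc 0 x, g y
      = ∫ z in Set.Ioc (0:ℝ) 1, θ * φ z / z * Real.exp (-(θ * (1 + z) * x)) := by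
    rw [subst1 hx g]
    exact setIntegral_congr_fun measurableSet_Ioc (fun z hz => eq1 hx hz)
  have hAint : IntegrableOn g (Set.Ioc 0 x) := by
    rw [subst1_int hx g]
    exact (intT1 hθ hφ_meas hφ_int' hx).congr_fun (fun z hz => (eq1 hx hz).symm)
      measurableSet_Ioc
  have hB : ∫ y in Set.Ioi x, g y
      = ∫ z in Set.Ioc (0:ℝ) 1, θ * φ z / z ^ 2 * Real.exp (-(θ * (1 + z⁻¹) * x)) := by
    rw [subst2 hx g, integral_Ioc_eq_integral_Ioo]
    exact (setIntegral_congr_fun measurableSet_Ioo (fun z hz => eq2 hx hz))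
  have hBint : IntegrableOn g (Set.Ioi x) := by
    rw [subst2_int hx g]
    exact ((intT2 hθ hφ_meas hφ_int' hx).mono_set Set.Ioo_subset_Ioc_self).congr_fun
      (fun z hz => (eq2 hx hz).symm) measurableSet_Ioo
  rw [← Set.Ioc_union_Ioi_eq_Ioi hx.le,
    setIntegral_union Set.Ioc_disjoint_Ioi_same measurableSet_Ioi hAint hBint, hA, hB,
    ← integral_add (intT1 hθ hφ_meas hφ_int' hx) (intT2 hθ hφ_meas hφ_int' hx)]
  rfl

lemma measFc (hφ_meas : Measurable φ) :
    Measurable (Function.uncurry (Fc θ φ)) := by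
  unfold Fc Function.uncurry
  fun_prop

lemma prod_int (hθ : 0 < θ) (hφ_meas : Measurable φ)
    (hφ_int : IntegrableOn (fun z => φ z / (z * (1 + z))) (Set.Ioc (0 : ℝ) 1)) :
    Integrable (Function.uncurry (Fc θ φ))
      ((volume.restrict (Set.Ioi (0:ℝ))).prod (volume.restrict (Set.Ioc (0:ℝ) 1))) := by
  rw [integrable_prod_iff' (measFc hφ_meas).aestronglyMeasurable]
  constructor
  · filter_upwards [ae_restrict_mem measurableSet_Ioc] with z hz
    exact int_x hθ hz.1
  · apply Integrable.mono (g := fun z => 2 * |φ z / (z * (1 + z))|)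
      ((hφ_int.abs).const_mul 2)
    · have hm : Measurable fun p : ℝ × ℝ => ‖Function.uncurry (Fc θ φ) (p.2, p.1)‖ := by
        exact ((measFc hφ_meas).comp (measurable_snd.prodMk measurable_fst)).norm
      exact hm.aestronglyMeasurable.integral_prod_right'
    · filter_upwards [ae_restrict_mem measurableSet_Ioc] with z hz
      obtain ⟨hz0, hz1⟩ := hz
      have hIx := int_x (φ := φ) hθ hz0
      have hbd : ∀ x : ℝ, ‖Fc θ φ x z‖ ≤
          |θ * φ z / z| * Real.exp (-(θ * (1 + z) * x)) +
            |θ * φ z / z ^ 2| * Real.exp (-(θ * (1 + z⁻¹) * x)) := by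
        intro x
        refine (norm_add_le _ _).trans ?_
        rw [Real.norm_eq_abs, Real.norm_eq_abs, abs_mul, abs_mul,
          abs_of_pos (Real.exp_pos _), abs_of_pos (Real.exp_pos _)]
      have hboundInt : Integrable
          (fun x => |θ * φ z / z| * Real.exp (-(θ * (1 + z) * x)) +
            |θ * φ z / z ^ 2| * Real.exp (-(θ * (1 + z⁻¹) * x)))
          (volume.restrict (Set.Ioi (0:ℝ))) :=
        ((exp_int1 hθ hz0).const_mul _).add ((exp_int2 hθ hz0).const_mul _)
      have h1 : ∫ x in Set.Ioi (0:ℝ), ‖Fc θ φ x z‖ ≤ 2 * |φ z| / (z * (1 + z)) := by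
        rw [← xint_abs hθ hz0]
        exact integral_mono hIx.norm hboundInt hbd
      have h2 : (0:ℝ) ≤ ∫ x in Set.Ioi (0:ℝ), ‖Fc θ φ x z‖ :=
        integral_nonneg (fun x => norm_nonneg _)
      have hru : ‖(2:ℝ) * |φ z / (z * (1 + z))|‖ = 2 * |φ z / (z * (1 + z))| := by
        rw [Real.norm_eq_abs]
        exact abs_of_nonneg (by positivity)
      simp only [Function.uncurry_apply_pair]
      rw [Real.norm_eq_abs, abs_of_nonneg h2, hru]
      calc (∫ x in Set.Ioi (0:ℝ), ‖Fc θ φ x z‖) ≤ 2 * |φ z| / (z * (1 + z)) := h1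
        _ = 2 * |φ z / (z * (1 + z))| := by
            rw [abs_div, abs_of_pos (by positivity : (0:ℝ) < z * (1 + z))]
            ring

end

/-- Change-of-variables identity for the double-integral component of the asymptotic
variance: with `r(x,y) = θ max(x,y) φ(min(x,y)/max(x,y))`,
`∫₀^∞∫₀^∞ r(x,y) (1/(xy)) e^{-θ(x+y)} dx dy = 2 ∫₀^1 φ(z)/(z(1+z)) dz`. -/
theorem double_integral_covariance_change_of_variables
    (θ : ℝ) (hθ : 0 < θ) (φ : ℝ → ℝ) (hφ_meas : Measurable φ)
    (hφ_int : IntegrableOn (fun z => φ z / (z * (1 + z))) (Set.Ioc (0 : ℝ) 1)) :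
    ∫ x in Set.Ioi (0 : ℝ), ∫ y in Set.Ioi (0 : ℝ),
        (θ * max x y * φ (min x y / max x y)) * (1 / (x * y)) * Real.exp (-θ * (x + y)) =
      2 * ∫ z in Set.Ioc (0 : ℝ) 1, φ z / (z * (1 + z)) := by
  have hφ_int' : IntegrableOn (fun z => φ z / z) (Set.Ioc (0:ℝ) 1) := by
    have hmeas : Measurable fun z : ℝ => φ z / z := by fun_prop
    apply Integrable.mono (g := fun z => 2 * (φ z / (z * (1 + z)))) (hφ_int.const_mul 2)
      hmeas.aestronglyMeasurable
    filter_upwards [ae_restrict_mem measurableSet_Ioc] with z hz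
    obtain ⟨hz0, hz1⟩ := hz
    have h1 : (0:ℝ) < 1 + z := by positivity
    have heq : φ z / z = φ z / (z * (1 + z)) * (1 + z) := by
      field_simp
    rw [Real.norm_eq_abs, Real.norm_eq_abs, heq, abs_mul, abs_mul, abs_of_pos h1]
    calc |φ z / (z * (1 + z))| * (1 + z) ≤ |φ z / (z * (1 + z))| * 2 := by
          apply mul_le_mul_of_nonneg_left (by linarith) (abs_nonneg _)
      _ = |2| * |φ z / (z * (1 + z))| := by rw [abs_two]; ring
  rw [setIntegral_congr_fun measurableSet_Ioi
    (fun x hx => inner_eq hθ hφ_meas hφ_int' hx)]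
  rw [integral_integral_swap (prod_int hθ hφ_meas hφ_int)]
  rw [setIntegral_congr_fun measurableSet_Ioc (fun z hz => xint_val hθ hz.1)]
  rw [integral_const_mul]
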